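/- arXiv:2603.01543 — 2 statements merged into one kernel-verified Lean document; each statement's English description precedes it below -/
import Mathlib

section
/- For Λ > 0, 1 < p < 3, R_Λ = √(3/Λ), and u(r) = ∫_r^{R_Λ} ρ^{-2/(p-1)} (1 - (Λ/3)ρ²)^{-1/2} dρ, the function A(r) = (u(r)/(p-1)) · √(1 - (Λ/3)r²) · r^{(3-p)/(p-1)} satisfies lim_{r→0⁺} A(r) = 1/(3-p). -/
open Real Filter MeasureTheory

/-- The radial profile of the model `p`-Green's function. -/
noncomputable def uModel (Λ p r : ℝ) : ℝ :=
  ∫ ρ in r..Real.sqrt (3 / Λ), ρ ^ (-(2 / (p - 1))) / Real.sqrt (1 - Λ / 3 * ρ ^ 2)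

/-- The quantity `A(r) = H/(2|∇w|)` of the model. -/
noncomputable def AModel (Λ p r : ℝ) : ℝ :=
  uModel Λ p r / (p - 1) * Real.sqrt (1 - Λ / 3 * r ^ 2) * r ^ ((3 - p) / (p - 1))

section Aux

open intervalIntegral Set Topology

private lemma aux_integrable (Λ p : ℝ) (hΛ : 0 < Λ) (hp1 : 1 < p) {a : ℝ} (ha : 0 < a)
    (haR : a < Real.sqrt (3 / Λ)) :
    IntervalIntegrable (fun ρ : ℝ => ρ ^ (-(2 / (p - 1))) / Real.sqrt (1 - Λ / 3 * ρ ^ 2))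
      volume a (Real.sqrt (3 / Λ)) := by
  set R := Real.sqrt (3 / Λ) with hRdef
  have hR : 0 < R := lt_trans ha haR
  have hR2 : R ^ 2 = 3 / Λ := Real.sq_sqrt (by positivity)
  have hR2' : Λ / 3 * R ^ 2 = 1 := by rw [hR2]; field_simp
  set M : ℝ := a ^ (-(2 / (p - 1))) * (Real.sqrt (Λ / 3 * R))⁻¹ with hM
  have hg : IntervalIntegrable (fun x : ℝ => M * (R - x) ^ (-(1/2) : ℝ)) volume a R := by
    have h1 : IntervalIntegrable (fun x : ℝ => x ^ (-(1/2) : ℝ)) volume 0 (R - a) :=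
      intervalIntegrable_rpow' (by norm_num)
    have h2 := (h1.comp_sub_left R).symm
    simpa using h2.const_mul M
  have hmeas : Measurable (fun ρ : ℝ => ρ ^ (-(2 / (p - 1))) / Real.sqrt (1 - Λ / 3 * ρ ^ 2)) := by
    fun_prop
  apply hg.mono_fun hmeas.aestronglyMeasurable
  filter_upwards [ae_restrict_mem measurableSet_uIoc] with ρ hρ
  rw [uIoc_of_le haR.le] at hρ
  obtain ⟨h1, h2⟩ := hρ
  have hρ0 : 0 < ρ := lt_trans ha h1
  have hnum : (0:ℝ) ≤ ρ ^ (-(2 / (p - 1))) := Real.rpow_nonneg hρ0.le _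
  have hRρ : 0 ≤ R - ρ := by linarith
  have hfpos : 0 ≤ ρ ^ (-(2 / (p - 1))) / Real.sqrt (1 - Λ / 3 * ρ ^ 2) := by positivity
  have hMpos : 0 ≤ M := by positivity
  have hgpos : (0:ℝ) ≤ (R - ρ) ^ (-(1/2) : ℝ) := Real.rpow_nonneg hRρ _
  rw [Real.norm_of_nonneg hfpos, Real.norm_of_nonneg (by positivity)]
  have hres : M * (R - ρ) ^ (-(1/2) : ℝ)
      = a ^ (-(2 / (p - 1))) / (Real.sqrt (Λ / 3 * R) * Real.sqrt (R - ρ)) := by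
    rw [hM, Real.rpow_neg hRρ, ← Real.sqrt_eq_rpow]
    field_simp
  have hden : Real.sqrt (Λ / 3 * R) * Real.sqrt (R - ρ) ≤ Real.sqrt (1 - Λ / 3 * ρ ^ 2) := by
    rw [← Real.sqrt_mul (by positivity)]
    apply Real.sqrt_le_sqrt
    nlinarith [mul_nonneg hRρ hρ0.le, div_nonneg hΛ.le (by norm_num : (0:ℝ) ≤ 3)]
  have hnum' : ρ ^ (-(2 / (p - 1))) ≤ a ^ (-(2 / (p - 1))) :=
    Real.rpow_le_rpow_of_nonpos ha h1.le
      (neg_nonpos.mpr (div_nonneg (by norm_num) (by linarith)))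
  rcases eq_or_lt_of_le h2 with heq | h2'
  · have h0 : 1 - Λ / 3 * ρ ^ 2 = 0 := by rw [heq]; linarith
    rw [h0, Real.sqrt_zero, div_zero]
    positivity
  · have hd0 : 0 < Real.sqrt (Λ / 3 * R) * Real.sqrt (R - ρ) :=
      mul_pos (Real.sqrt_pos.2 (by positivity)) (Real.sqrt_pos.2 (by linarith))
    rw [hres]
    calc ρ ^ (-(2 / (p - 1))) / Real.sqrt (1 - Λ / 3 * ρ ^ 2)
        ≤ ρ ^ (-(2 / (p - 1))) / (Real.sqrt (Λ / 3 * R) * Real.sqrt (R - ρ)) :=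
          div_le_div_of_nonneg_left hnum hd0 hden
      _ ≤ a ^ (-(2 / (p - 1))) / (Real.sqrt (Λ / 3 * R) * Real.sqrt (R - ρ)) := by
          gcongr

set_option maxHeartbeats 2000000 in
private lemma aux_bounds (Λ p : ℝ) (hΛ : 0 < Λ) (hp1 : 1 < p) (hp3 : p < 3) {c r : ℝ}
    (hr : 0 < r) (hrc : r < c) (hcR : c < Real.sqrt (3 / Λ)) :
    Real.sqrt (1 - Λ / 3 * r ^ 2) * (1 - r ^ ((3 - p) / (p - 1)) * c ^ (-((3 - p) / (p - 1))))
        / (3 - p) ≤ AModel Λ p r ∧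
    AModel Λ p r ≤ (Real.sqrt (1 - Λ / 3 * c ^ 2))⁻¹ / (3 - p)
        + (∫ ρ in c..Real.sqrt (3 / Λ), ρ ^ (-(2 / (p - 1))) / Real.sqrt (1 - Λ / 3 * ρ ^ 2))
          * r ^ ((3 - p) / (p - 1)) / (p - 1) := by
  have hp1' : (0:ℝ) < p - 1 := by linarith
  have h3p : (0:ℝ) < 3 - p := by linarith
  set R := Real.sqrt (3 / Λ) with hRdef
  set α := (3 - p) / (p - 1) with hαdef
  have hα : 0 < α := by positivity
  have hαp : α * (p - 1) = 3 - p := by rw [hαdef]; field_simp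
  have hc0 : 0 < c := hr.trans hrc
  have hrR : r < R := hrc.trans hcR
  have hR : 0 < R := hr.trans hrR
  have hR2' : Λ / 3 * R ^ 2 = 1 := by
    rw [hRdef, Real.sq_sqrt (by positivity : (0:ℝ) ≤ 3 / Λ)]; field_simp
  set f := fun ρ : ℝ => ρ ^ (-(2 / (p - 1))) / Real.sqrt (1 - Λ / 3 * ρ ^ 2) with hfdef
  have hint_rR := aux_integrable Λ p hΛ hp1 hr hrR
  have hint_cR := aux_integrable Λ p hΛ hp1 hc0 hcR
  have hint_rc : IntervalIntegrable f volume r c := hint_rR.trans hint_cR.symm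
  have hsplit : uModel Λ p r = (∫ ρ in r..c, f ρ) + ∫ ρ in c..R, f ρ :=
    (integral_add_adjacent_intervals hint_rc hint_cR).symm
  have hexp : -(2 / (p - 1)) + 1 = -α := by rw [hαdef]; field_simp; ring
  have hnotmem : (0:ℝ) ∉ uIcc r c := by
    rw [uIcc_of_le hrc.le]; simp only [mem_Icc, not_and_or]; left; intro h; linarith
  have hpow : (∫ ρ in r..c, ρ ^ (-(2 / (p - 1)))) = (c ^ (-α) - r ^ (-α)) / (-α) := by
    rw [integral_rpow (Or.inr ⟨by intro h; rw [h] at hexp; linarith [hα], hnotmem⟩), hexp]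
  -- positivity of denominators on [r,c]
  have hsx : ∀ x ∈ Icc r c, 0 < 1 - Λ / 3 * x ^ 2 := by
    intro x hx
    have hx0 : 0 < x := lt_of_lt_of_le hr hx.1
    have hxR : x < R := lt_of_le_of_lt hx.2 hcR
    nlinarith [mul_pos (div_pos hΛ (by norm_num : (0:ℝ) < 3)) (mul_pos (sub_pos.2 hxR) (by linarith : (0:ℝ) < R + x))]
  have hsc : 0 < Real.sqrt (1 - Λ / 3 * c ^ 2) :=
    Real.sqrt_pos.2 (hsx c ⟨hrc.le, le_refl c⟩)
  -- lower bound on inner integral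
  have hlow : (c ^ (-α) - r ^ (-α)) / (-α) ≤ ∫ ρ in r..c, f ρ := by
    rw [← hpow]
    apply integral_mono_on hrc.le
      (intervalIntegrable_rpow (Or.inr hnotmem)) hint_rc
    intro x hx
    have hx0 : 0 < x := lt_of_lt_of_le hr hx.1
    have hs0 : 0 < Real.sqrt (1 - Λ / 3 * x ^ 2) := Real.sqrt_pos.2 (hsx x hx)
    have hs1 : Real.sqrt (1 - Λ / 3 * x ^ 2) ≤ 1 :=
      Real.sqrt_le_one.2 (by nlinarith [hsx x hx])
    rw [hfdef]
    simp only
    rw [le_div_iff₀ hs0]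
    have h0 := Real.rpow_nonneg hx0.le (-(2 / (p - 1)))
    nlinarith
  -- upper bound on inner integral
  have hup : (∫ ρ in r..c, f ρ) ≤
      (Real.sqrt (1 - Λ / 3 * c ^ 2))⁻¹ * ((c ^ (-α) - r ^ (-α)) / (-α)) := by
    rw [← hpow, ← intervalIntegral.integral_const_mul]
    apply integral_mono_on hrc.le hint_rc
      ((intervalIntegrable_rpow (Or.inr hnotmem)).const_mul _)
    intro x hx
    have hx0 : 0 < x := lt_of_lt_of_le hr hx.1
    have hmono : Real.sqrt (1 - Λ / 3 * c ^ 2) ≤ Real.sqrt (1 - Λ / 3 * x ^ 2) := by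
      apply Real.sqrt_le_sqrt
      nlinarith [mul_nonneg (mul_nonneg (div_nonneg hΛ.le (by norm_num : (0:ℝ) ≤ 3))
        (by linarith [hx.2] : (0:ℝ) ≤ c - x)) (by linarith [hx.2] : (0:ℝ) ≤ c + x)]
    rw [hfdef]
    simp only
    rw [inv_mul_eq_div]
    exact div_le_div_of_nonneg_left (Real.rpow_nonneg hx0.le _) hsc hmono
  -- tail nonneg
  have htail : 0 ≤ ∫ ρ in c..R, f ρ := by
    apply integral_nonneg hcR.le
    intro x hx
    have hx0 : 0 ≤ x := le_trans hc0.le hx.1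
    rw [hfdef]; positivity
  -- basic quantities
  have hrα : (0:ℝ) < r ^ α := Real.rpow_pos_of_pos hr α
  have hrinv : r ^ (-α) = (r ^ α)⁻¹ := Real.rpow_neg hr.le α
  have hcα : (0:ℝ) < c ^ (-α) := Real.rpow_pos_of_pos hc0 _
  have hIlow0 : 0 ≤ (c ^ (-α) - r ^ (-α)) / (-α) := by
    apply div_nonneg_of_nonpos _ (by linarith : -α ≤ 0)
    have := Real.rpow_le_rpow_of_nonpos hr hrc.le (neg_nonpos.2 hα.le)
    linarith
  have hs0' : 0 ≤ Real.sqrt (1 - Λ / 3 * r ^ 2) := Real.sqrt_nonneg _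
  have hs1' : Real.sqrt (1 - Λ / 3 * r ^ 2) ≤ 1 :=
    Real.sqrt_le_one.2 (by nlinarith)
  have hkey : (c ^ (-α) - r ^ (-α)) / (-α) * r ^ α = (1 - r ^ α * c ^ (-α)) / α := by
    rw [hrinv]; field_simp; ring
  constructor
  · -- lower bound
    have h1 : (c ^ (-α) - r ^ (-α)) / (-α) ≤ uModel Λ p r := by
      rw [hsplit]; linarith
    rw [AModel]
    have hkey2 : ((c ^ (-α) - r ^ (-α)) / (-α)) / (p - 1) * Real.sqrt (1 - Λ / 3 * r ^ 2) * r ^ α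
        = Real.sqrt (1 - Λ / 3 * r ^ 2) * (1 - r ^ α * c ^ (-α)) / (3 - p) := by
      rw [hrinv, ← hαp]
      field_simp
      ring
    rw [← hkey2]
    gcongr
  · -- upper bound
    have hu : uModel Λ p r ≤
        (Real.sqrt (1 - Λ / 3 * c ^ 2))⁻¹ * ((c ^ (-α) - r ^ (-α)) / (-α)) + ∫ ρ in c..R, f ρ := by
      rw [hsplit]; linarith
    have hu0 : 0 ≤ uModel Λ p r := by
      rw [hsplit]; linarith [hIlow0.trans hlow]
    rw [AModel]
    calc uModel Λ p r / (p - 1) * Real.sqrt (1 - Λ / 3 * r ^ 2) * r ^ α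
        ≤ uModel Λ p r / (p - 1) * 1 * r ^ α :=
          mul_le_mul_of_nonneg_right
            (mul_le_mul_of_nonneg_left hs1' (div_nonneg hu0 hp1'.le)) hrα.le
      _ ≤ ((Real.sqrt (1 - Λ / 3 * c ^ 2))⁻¹ * ((c ^ (-α) - r ^ (-α)) / (-α)) + ∫ ρ in c..R, f ρ)
            / (p - 1) * 1 * r ^ α :=
          mul_le_mul_of_nonneg_right
            (mul_le_mul_of_nonneg_right ((div_le_div_iff_of_pos_right hp1').mpr hu) zero_le_one) hrα.le
      _ = (Real.sqrt (1 - Λ / 3 * c ^ 2))⁻¹ * ((c ^ (-α) - r ^ (-α)) / (-α) * r ^ α) / (p - 1)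
            + (∫ ρ in c..R, f ρ) * r ^ α / (p - 1) := by ring
      _ ≤ (Real.sqrt (1 - Λ / 3 * c ^ 2))⁻¹ * (1 / α) / (p - 1)
            + (∫ ρ in c..R, f ρ) * r ^ α / (p - 1) := by
          have hle : (c ^ (-α) - r ^ (-α)) / (-α) * r ^ α ≤ 1 / α := by
            rw [hkey]
            gcongr
            nlinarith [mul_pos hrα hcα]
          gcongr
      _ = (Real.sqrt (1 - Λ / 3 * c ^ 2))⁻¹ / (3 - p)
            + (∫ ρ in c..R, f ρ) * r ^ α / (p - 1) := by
          rw [← hαp]; field_simp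

end Aux

section Main

open intervalIntegral Set Topology

/-- `lim_{r→0⁺} A(r) = 1/(3-p)`. -/
theorem stmt_1 (Λ p : ℝ) (hΛ : 0 < Λ) (hp1 : 1 < p) (hp3 : p < 3) :
    Tendsto (fun r : ℝ => AModel Λ p r) (nhdsWithin 0 (Set.Ioi 0))
      (nhds (1 / (3 - p))) := by
  have hp1' : (0:ℝ) < p - 1 := by linarith
  have h3p : (0:ℝ) < 3 - p := by linarith
  set R := Real.sqrt (3 / Λ) with hRdef
  have hR : 0 < R := Real.sqrt_pos.2 (by positivity)
  set α := (3 - p) / (p - 1) with hαdef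
  have hα : 0 < α := by positivity
  -- basic limits
  have hsqrt : Tendsto (fun r : ℝ => Real.sqrt (1 - Λ / 3 * r ^ 2)) (𝓝 0) (𝓝 1) := by
    have hc : Continuous fun r : ℝ => Real.sqrt (1 - Λ / 3 * r ^ 2) := by fun_prop
    have := hc.tendsto 0
    simpa using this
  have hrpow : Tendsto (fun r : ℝ => r ^ α) (𝓝 0) (𝓝 0) := by
    have := (Real.continuousAt_rpow_const 0 α (Or.inr hα.le)).tendsto
    simpa [Real.zero_rpow hα.ne'] using this
  rw [tendsto_order]
  constructor
  · -- lower bound part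
    intro a ha
    set c := R / 2 with hcdef
    have hc0 : 0 < c := by positivity
    have hcR : c < R := by rw [hcdef]; linarith
    have hB : Tendsto (fun r : ℝ => Real.sqrt (1 - Λ / 3 * r ^ 2) * (1 - r ^ α * c ^ (-α))
        / (3 - p)) (𝓝 0) (𝓝 (1 / (3 - p))) := by
      have h1 : Tendsto (fun r : ℝ => 1 - r ^ α * c ^ (-α)) (𝓝 0) (𝓝 1) := by
        have := (hrpow.mul_const (c ^ (-α))).const_sub 1
        simpa using this
      have := (hsqrt.mul h1).div_const (3 - p)
      simpa using this
    have hev : ∀ᶠ r in nhdsWithin (0:ℝ) (Set.Ioi 0),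
        a < Real.sqrt (1 - Λ / 3 * r ^ 2) * (1 - r ^ α * c ^ (-α)) / (3 - p) :=
      (hB.mono_left nhdsWithin_le_nhds).eventually_const_lt ha
    filter_upwards [hev, Ioo_mem_nhdsGT_of_mem (by constructor <;> [rfl; exact hc0] : (0:ℝ) ∈ Ico 0 c)]
      with r h1 h2
    exact lt_of_lt_of_le h1 (aux_bounds Λ p hΛ hp1 hp3 h2.1 h2.2 hcR).1
  · -- upper bound part
    intro b hb
    -- choose c small
    have hK : Tendsto (fun c : ℝ => (Real.sqrt (1 - Λ / 3 * c ^ 2))⁻¹ / (3 - p)) (𝓝 0)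
        (𝓝 (1 / (3 - p))) := by
      have := (hsqrt.inv₀ (by norm_num)).div_const (3 - p)
      simpa using this
    have hev1 : ∀ᶠ c in nhdsWithin (0:ℝ) (Set.Ioi 0),
        (Real.sqrt (1 - Λ / 3 * c ^ 2))⁻¹ / (3 - p) < b :=
      (hK.mono_left nhdsWithin_le_nhds).eventually_lt_const hb
    have hev2 : ∀ᶠ c in nhdsWithin (0:ℝ) (Set.Ioi 0), c ∈ Set.Ioo (0:ℝ) R :=
      Ioo_mem_nhdsGT_of_mem (by constructor <;> [rfl; exact hR])
    obtain ⟨c, hKc, hc0, hcR⟩ := (hev1.and hev2).exists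
    set T := ∫ ρ in c..R, ρ ^ (-(2 / (p - 1))) / Real.sqrt (1 - Λ / 3 * ρ ^ 2) with hT
    have hU : Tendsto (fun r : ℝ => (Real.sqrt (1 - Λ / 3 * c ^ 2))⁻¹ / (3 - p)
        + T * r ^ α / (p - 1)) (𝓝 0)
        (𝓝 ((Real.sqrt (1 - Λ / 3 * c ^ 2))⁻¹ / (3 - p))) := by
      have h1 := ((hrpow.const_mul T).div_const (p - 1)).const_add
        ((Real.sqrt (1 - Λ / 3 * c ^ 2))⁻¹ / (3 - p))
      simpa [mul_comm] using h1
    have hev3 : ∀ᶠ r in nhdsWithin (0:ℝ) (Set.Ioi 0),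
        (Real.sqrt (1 - Λ / 3 * c ^ 2))⁻¹ / (3 - p) + T * r ^ α / (p - 1) < b :=
      (hU.mono_left nhdsWithin_le_nhds).eventually_lt_const hKc
    filter_upwards [hev3, Ioo_mem_nhdsGT_of_mem (by constructor <;> [rfl; exact hc0])]
      with r h1 h2
    exact lt_of_le_of_lt (aux_bounds Λ p hΛ hp1 hp3 h2.1 h2.2 hcR).2 h1

end Main
end

section
/- For Λ > 0 and 1 < p < 3, the function r_p(t) implicitly defined by ∫_{r_p(t)}^{R_Λ} ρ^{-2/(p-1)}(1-(Λ/3)ρ²)^{-1/2} dρ = e^{-t/(p-1)} converges pointwise, as p → 1⁺, to r_1(t) = e^{t/2} for t < 2 log R_Λ and r_1(t) = R_Λ for t ≥ 2 log R_Λ, where R_Λ = √(3/Λ). -/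
open Real Filter MeasureTheory Set

noncomputable def Cc (Λ : ℝ) : ℝ :=
  ∫ ρ in Ioo (0:ℝ) (Real.sqrt (3/Λ)), 1 / Real.sqrt (1 - Λ/3 * ρ^2)

lemma hker {Λ : ℝ} (hΛ : 0 < Λ) :
    IntegrableOn (fun ρ => 1 / Real.sqrt (1 - Λ/3 * ρ^2)) (Ioo 0 (Real.sqrt (3/Λ))) := by
  set R := Real.sqrt (3/Λ) with hRdef
  have hR : 0 < R := Real.sqrt_pos.2 (by positivity)
  have hRsq : Λ/3 * R^2 = 1 := by
    rw [hRdef, Real.sq_sqrt (by positivity)]; field_simp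
  have h1 : IntervalIntegrable (fun x : ℝ => x ^ (-(1/2) : ℝ)) volume 0 R :=
    intervalIntegral.intervalIntegrable_rpow' (by norm_num)
  have h2 : IntervalIntegrable (fun x => (R - x) ^ (-(1/2) : ℝ)) volume 0 R := by
    simpa using (h1.comp_sub_left R).symm
  have hdom : IntegrableOn (fun x => Real.sqrt R * (R - x) ^ (-(1/2) : ℝ)) (Ioo 0 R) :=
    ((intervalIntegrable_iff_integrableOn_Ioo_of_le hR.le).1 h2).const_mul _
  have hcont : ContinuousOn (fun ρ => 1 / Real.sqrt (1 - Λ/3 * ρ^2)) (Ioo 0 R) := by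
    apply ContinuousOn.div continuousOn_const
    · exact (Real.continuous_sqrt.comp (by continuity)).continuousOn
    · intro ρ hρ
      have : 0 < 1 - Λ/3 * ρ^2 := by nlinarith [hρ.1, hρ.2]
      positivity
  refine Integrable.mono hdom (hcont.aestronglyMeasurable measurableSet_Ioo) ?_
  rw [ae_restrict_iff' measurableSet_Ioo]
  filter_upwards with ρ hρ
  have hρR : 0 < R - ρ := sub_pos.2 hρ.2
  have hpos : 0 < 1 - Λ/3 * ρ^2 := by nlinarith [hρ.1, hρ.2]
  have key : (R - ρ)/R ≤ 1 - Λ/3 * ρ^2 := by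
    rw [div_le_iff₀ hR]
    nlinarith [mul_pos (mul_pos (mul_pos (by linarith : (0:ℝ) < Λ/3) hρ.1) hR) hρR]
  have h3 : Real.sqrt ((R-ρ)/R) ≤ Real.sqrt (1 - Λ/3 * ρ^2) := Real.sqrt_le_sqrt key
  have h4 : 0 < Real.sqrt ((R-ρ)/R) := Real.sqrt_pos.2 (by positivity)
  rw [Real.norm_eq_abs, Real.norm_eq_abs, abs_of_nonneg (by positivity),
    abs_of_nonneg (by positivity)]
  calc 1 / Real.sqrt (1 - Λ/3 * ρ^2) ≤ 1 / Real.sqrt ((R-ρ)/R) :=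
        one_div_le_one_div_of_le h4 h3
    _ = Real.sqrt R * (R - ρ) ^ (-(1/2) : ℝ) := by
        rw [Real.sqrt_div hρR.le, one_div_div, Real.rpow_neg hρR.le,
          ← Real.sqrt_eq_rpow, div_eq_mul_inv]

lemma Cc_ge {Λ : ℝ} (hΛ : 0 < Λ) : Real.sqrt (3/Λ) ≤ Cc Λ := by
  set R := Real.sqrt (3/Λ) with hRdef
  have hR : 0 < R := Real.sqrt_pos.2 (by positivity)
  have hle : ∀ ρ ∈ Ioo (0:ℝ) R, (1:ℝ) ≤ 1 / Real.sqrt (1 - Λ/3 * ρ^2) := by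
    intro ρ hρ
    have hRsq : Λ/3 * R^2 = 1 := by
      rw [hRdef, Real.sq_sqrt (by positivity)]; field_simp
    have hpos : 0 < 1 - Λ/3 * ρ^2 := by nlinarith [hρ.1, hρ.2]
    have h1 : Real.sqrt (1 - Λ/3 * ρ^2) ≤ 1 := by
      have := Real.sqrt_le_sqrt (show 1 - Λ/3 * ρ^2 ≤ 1 by nlinarith [sq_nonneg ρ])
      simpa using this
    have h2 : 0 < Real.sqrt (1 - Λ/3 * ρ^2) := Real.sqrt_pos.2 hpos
    calc (1:ℝ) = 1/1 := by norm_num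
      _ ≤ 1 / Real.sqrt (1 - Λ/3 * ρ^2) := one_div_le_one_div_of_le h2 h1
  have hmono := setIntegral_mono_on (show IntegrableOn (fun _ : ℝ => (1:ℝ)) (Ioo 0 R) from integrableOn_const measure_Ioo_lt_top.ne)
    (hker hΛ) measurableSet_Ioo hle
  have h1 : ∫ _ρ in Ioo (0:ℝ) R, (1:ℝ) = R := by
    rw [setIntegral_const, Real.volume_real_Ioo_of_le hR.le, smul_eq_mul, mul_one, sub_zero]
  rw [h1] at hmono
  exact hmono

lemma key {Λ p rr E : ℝ} (hΛ : 0 < Λ) (hp1 : 1 < p) (hp3 : p < 3)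
    (hr0 : 0 < rr) (hrR : rr < Real.sqrt (3/Λ)) (hE : 0 < E)
    (hu : uModel Λ p rr = E) :
    (p-1)/(3-p) * (rr ^ ((p-3)/(p-1)) - (Real.sqrt (3/Λ)) ^ ((p-3)/(p-1))) ≤ E ∧
    E ≤ rr ^ (-(2/(p-1))) * Cc Λ := by
  set R := Real.sqrt (3/Λ) with hRdef
  have hR : 0 < R := Real.sqrt_pos.2 (by positivity)
  have hRsq : Λ/3 * R^2 = 1 := by
    rw [hRdef, Real.sq_sqrt (by positivity)]; field_simp
  have hp1' : (0:ℝ) < p - 1 := by linarith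
  set f := fun ρ : ℝ => ρ ^ (-(2 / (p - 1))) / Real.sqrt (1 - Λ / 3 * ρ ^ 2) with hf
  -- interval integrability of f, extracted from hu
  have hfI : IntervalIntegrable f volume rr R := by
    by_contra h
    rw [uModel, intervalIntegral.integral_undef h] at hu
    linarith
  have hfIoo : IntegrableOn f (Ioo rr R) :=
    (intervalIntegrable_iff_integrableOn_Ioo_of_le hrR.le).1 hfI
  have hu' : ∫ ρ in Ioo rr R, f ρ = E := by
    rw [← MeasureTheory.integral_Ioc_eq_integral_Ioo,
      ← intervalIntegral.integral_of_le hrR.le]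
    exact hu
  have hden : ∀ ρ ∈ Ioo rr R, 0 < 1 - Λ/3 * ρ^2 ∧ Real.sqrt (1 - Λ/3 * ρ^2) ≤ 1 := by
    intro ρ hρ
    have h0 : 0 < ρ := lt_trans hr0 hρ.1
    have hpos : 0 < 1 - Λ/3 * ρ^2 := by nlinarith [hρ.2]
    refine ⟨hpos, ?_⟩
    have := Real.sqrt_le_sqrt (show 1 - Λ/3 * ρ^2 ≤ 1 by nlinarith [sq_nonneg ρ])
    simpa using this
  constructor
  · -- lower bound
    set g := fun ρ : ℝ => ρ ^ (-(2 / (p - 1))) with hg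
    have hgI : IntegrableOn g (Ioo rr R) := by
      refine (ContinuousOn.integrableOn_Icc ?_).mono_set Ioo_subset_Icc_self
      intro ρ hρ
      exact (Real.continuousAt_rpow_const ρ _ (Or.inl (by linarith [hρ.1]))).continuousWithinAt
    have hle : ∀ ρ ∈ Ioo rr R, g ρ ≤ f ρ := by
      intro ρ hρ
      obtain ⟨hpos, hle1⟩ := hden ρ hρ
      have h0 : 0 < ρ := lt_trans hr0 hρ.1
      have hs : 0 < Real.sqrt (1 - Λ/3 * ρ^2) := Real.sqrt_pos.2 hpos
      have hgpos : 0 < g ρ := Real.rpow_pos_of_pos h0 _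
      rw [hf, hg]
      simp only
      rw [le_div_iff₀ hs]
      nlinarith
    have hmono := setIntegral_mono_on hgI hfIoo measurableSet_Ioo hle
    rw [hu'] at hmono
    refine le_trans (le_of_eq ?_) hmono
    rw [← MeasureTheory.integral_Ioc_eq_integral_Ioo,
      ← intervalIntegral.integral_of_le hrR.le]
    rw [hg]
    rw [integral_rpow (Or.inr ⟨by
        intro hc
        have : 2 / (p-1) = 1 := by linarith [neg_eq_iff_eq_neg.1 hc]
        have : p = 3 := by field_simp at this; linarith
        linarith, by
        intro hc
        rcases hc with ⟨h1, h2⟩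
        simp only [inf_le_iff] at h1
        rcases h1 with h | h <;> linarith [min_le_left rr R]⟩)]
    have he : -(2/(p-1)) + 1 = (p-3)/(p-1) := by field_simp; ring
    rw [he]
    have h1 : p - 1 ≠ 0 := by intro h; linarith
    have h2 : p - 3 ≠ 0 := by intro h; linarith
    have h3 : (3:ℝ) - p ≠ 0 := by intro h; linarith
    generalize rr ^ ((p-3)/(p-1)) = X
    generalize R ^ ((p-3)/(p-1)) = Y
    field_simp
    ring
  · -- upper bound
    set h := fun ρ : ℝ => 1 / Real.sqrt (1 - Λ/3 * ρ^2) with hh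
    have hhI : IntegrableOn h (Ioo rr R) :=
      (hker hΛ).mono_set (Ioo_subset_Ioo hr0.le le_rfl)
    have hle : ∀ ρ ∈ Ioo rr R, f ρ ≤ rr ^ (-(2/(p-1))) * h ρ := by
      intro ρ hρ
      obtain ⟨hpos, hle1⟩ := hden ρ hρ
      have hs : 0 < Real.sqrt (1 - Λ/3 * ρ^2) := Real.sqrt_pos.2 hpos
      have hrpow : ρ ^ (-(2/(p-1))) ≤ rr ^ (-(2/(p-1))) :=
        Real.rpow_le_rpow_of_nonpos hr0 hρ.1.le
          (neg_nonpos.2 (by positivity : (0:ℝ) ≤ 2/(p-1)))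
      rw [hf, hh]
      simp only
      rw [mul_one_div, div_le_div_iff₀ hs hs]
      nlinarith [Real.rpow_pos_of_pos (lt_trans hr0 hρ.1) (-(2/(p-1)))]
    have hmono := setIntegral_mono_on hfIoo (hhI.const_mul _) measurableSet_Ioo hle
    rw [hu'] at hmono
    refine le_trans hmono ?_
    rw [MeasureTheory.integral_const_mul]
    have hCge : ∫ ρ in Ioo rr R, h ρ ≤ Cc Λ := by
      refine setIntegral_mono_set (hker hΛ) ?_ ?_
      · filter_upwards with ρ
        rw [hh]; positivity
      · exact HasSubset.Subset.eventuallyLE (Ioo_subset_Ioo hr0.le le_rfl)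
    have : (0:ℝ) ≤ rr ^ (-(2/(p-1))) := (Real.rpow_pos_of_pos hr0 _).le
    exact mul_le_mul_of_nonneg_left hCge this

/-- The pseudo-radial functions `r_p(t)`, defined by `u_p(r_p(t)) = e^{-t/(p-1)}`,
converge pointwise as `p → 1⁺` to `e^{t/2}` for `t < 2 log R_Λ` and to `R_Λ` for
`t ≥ 2 log R_Λ`. -/
theorem stmt_15 (Λ : ℝ) (hΛ : 0 < Λ) (r : ℝ → ℝ → ℝ)
    (hr : ∀ p : ℝ, 1 < p → p < 3 → ∀ t : ℝ,
      r p t ∈ Set.Ioo (0 : ℝ) (Real.sqrt (3 / Λ)) ∧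
      uModel Λ p (r p t) = Real.exp (-t / (p - 1))) :
    ∀ t : ℝ,
      Tendsto (fun p : ℝ => r p t) (nhdsWithin 1 (Set.Ioi 1))
        (nhds (if t < 2 * Real.log (Real.sqrt (3 / Λ)) then Real.exp (t / 2)
          else Real.sqrt (3 / Λ))) := by
  intro t
  set R := Real.sqrt (3/Λ) with hRdef
  have hR : 0 < R := Real.sqrt_pos.2 (by positivity)
  have hC : 0 < Cc Λ := lt_of_lt_of_le hR (Cc_ge hΛ)
  have hval : (if t < 2 * Real.log R then Real.exp (t/2) else R)
      = min (Real.exp (t/2)) R := by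
    split_ifs with h
    · refine (min_eq_left ?_).symm
      calc Real.exp (t/2) ≤ Real.exp (Real.log R) := Real.exp_le_exp.2 (by linarith)
        _ = R := Real.exp_log hR
    · refine (min_eq_right ?_).symm
      push_neg at h
      calc R = Real.exp (Real.log R) := (Real.exp_log hR).symm
        _ ≤ Real.exp (t/2) := Real.exp_le_exp.2 (by linarith)
  rw [hval]
  set lo := fun p : ℝ => Real.exp (Real.log 2 * ((p-1)/(p-3))) *
    min (Real.exp ((Real.log (3-p) - Real.log (p-1)) * ((p-1)/(p-3)) + t/(3-p))) R
    with hlo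
  set hi := fun p : ℝ => min (Real.exp (Real.log (Cc Λ) * ((p-1)/2) + t/2)) R with hhi
  have hmem : ∀ᶠ p in nhdsWithin (1:ℝ) (Set.Ioi 1), p ∈ Set.Ioo (1:ℝ) 3 := by
    filter_upwards [self_mem_nhdsWithin,
      (eventually_lt_nhds (by norm_num : (1:ℝ) < 3)).filter_mono nhdsWithin_le_nhds]
      with p h1 h2
    exact ⟨h1, h2⟩
  -- limit of the exponent helpers
  have hc : Tendsto (fun p : ℝ => (p-1)/(p-3)) (nhdsWithin 1 (Set.Ioi 1)) (nhds 0) := by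
    have h1 : ContinuousAt (fun p : ℝ => (p-1)/(p-3)) 1 :=
      ContinuousAt.div (by fun_prop) (by fun_prop) (by norm_num)
    have h2 := h1.tendsto.mono_left (nhdsWithin_le_nhds (s := Set.Ioi (1:ℝ)))
    simpa using h2
  have hsub : Tendsto (fun p : ℝ => p - 1) (nhdsWithin 1 (Set.Ioi 1))
      (nhdsWithin 0 (Set.Ioi 0)) := by
    apply tendsto_nhdsWithin_of_tendsto_nhds_of_eventually_within
    · have h0 : ContinuousAt (fun p : ℝ => p - 1) 1 := by fun_prop
      have h1 : Tendsto (fun p : ℝ => p - 1) (nhds 1) (nhds 0) := by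
        simpa using h0.tendsto
      exact h1.mono_left (nhdsWithin_le_nhds (s := Set.Ioi (1:ℝ)))
    · filter_upwards [self_mem_nhdsWithin] with p hp
      exact sub_pos.2 (Set.mem_Ioi.1 hp)
  have hlog : Tendsto (fun p : ℝ => Real.log (p-1) * (p-1))
      (nhdsWithin 1 (Set.Ioi 1)) (nhds 0) := by
    have := (tendsto_log_mul_rpow_nhdsGT_zero one_pos).comp hsub
    simpa [Function.comp_def, Real.rpow_one] using this
  have hA : Tendsto (fun p : ℝ => (Real.log (3-p) - Real.log (p-1)) * ((p-1)/(p-3)) + t/(3-p))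
      (nhdsWithin 1 (Set.Ioi 1)) (nhds (t/2)) := by
    have heq : ∀ p : ℝ, (Real.log (3-p) - Real.log (p-1)) * ((p-1)/(p-3)) + t/(3-p)
        = Real.log (3-p) * ((p-1)/(p-3)) - (Real.log (p-1) * (p-1)) * (p-3)⁻¹ + t/(3-p) := by
      intro p; ring
    simp only [heq]
    have t1 : Tendsto (fun p : ℝ => Real.log (3-p) * ((p-1)/(p-3)))
        (nhdsWithin 1 (Set.Ioi 1)) (nhds 0) := by
      have h1 : ContinuousAt (fun p : ℝ => Real.log (3-p) * ((p-1)/(p-3))) 1 := by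
        apply ContinuousAt.mul
        · exact (Real.continuousAt_log (by norm_num)).comp (by fun_prop)
        · exact ContinuousAt.div (by fun_prop) (by fun_prop) (by norm_num)
      have h2 := h1.tendsto.mono_left (nhdsWithin_le_nhds (s := Set.Ioi (1:ℝ)))
      simpa using h2
    have t2 : Tendsto (fun p : ℝ => (Real.log (p-1) * (p-1)) * (p-3)⁻¹)
        (nhdsWithin 1 (Set.Ioi 1)) (nhds 0) := by
      have h2 : Tendsto (fun p : ℝ => (p-3)⁻¹) (nhdsWithin (1:ℝ) (Set.Ioi 1))
          (nhds ((1-3)⁻¹)) :=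
        (ContinuousAt.inv₀ (by fun_prop) (by norm_num)).tendsto.mono_left
          (nhdsWithin_le_nhds (s := Set.Ioi (1:ℝ)))
      have h3 := hlog.mul h2
      simpa using h3
    have t3 : Tendsto (fun p : ℝ => t/(3-p)) (nhdsWithin (1:ℝ) (Set.Ioi 1))
        (nhds (t/2)) := by
      have h3 : ContinuousAt (fun p : ℝ => t/(3-p)) 1 :=
        ContinuousAt.div (by fun_prop) (by fun_prop) (by norm_num)
      have h4 := h3.tendsto.mono_left (nhdsWithin_le_nhds (s := Set.Ioi (1:ℝ)))
      convert h4 using 2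
      norm_num
    have h5 := (t1.sub t2).add t3
    simpa using h5
  have hlo_lim : Tendsto lo (nhdsWithin 1 (Set.Ioi 1)) (nhds (min (Real.exp (t/2)) R)) := by
    rw [hlo]
    have e1 : Tendsto (fun p : ℝ => Real.exp (Real.log 2 * ((p-1)/(p-3))))
        (nhdsWithin 1 (Set.Ioi 1)) (nhds 1) := by
      have h0 : Tendsto (fun p : ℝ => Real.log 2 * ((p-1)/(p-3)))
          (nhdsWithin 1 (Set.Ioi 1)) (nhds 0) := by
        simpa using hc.const_mul (Real.log 2)
      have := (Real.continuous_exp.tendsto 0).comp h0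
      simpa [Function.comp_def] using this
    have e2 : Tendsto (fun p : ℝ =>
        min (Real.exp ((Real.log (3-p) - Real.log (p-1)) * ((p-1)/(p-3)) + t/(3-p))) R)
        (nhdsWithin 1 (Set.Ioi 1)) (nhds (min (Real.exp (t/2)) R)) :=
      Tendsto.min ((Real.continuous_exp.tendsto _).comp hA) tendsto_const_nhds
    have := e1.mul e2
    simpa using this
  have hhi_lim : Tendsto hi (nhdsWithin 1 (Set.Ioi 1)) (nhds (min (Real.exp (t/2)) R)) := by
    rw [hhi]
    have e1 : Tendsto (fun p : ℝ => Real.log (Cc Λ) * ((p-1)/2) + t/2)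
        (nhdsWithin 1 (Set.Ioi 1)) (nhds (t/2)) := by
      have h1 : ContinuousAt (fun p : ℝ => Real.log (Cc Λ) * ((p-1)/2) + t/2) 1 := by
        fun_prop
      have h2 := h1.tendsto.mono_left (nhdsWithin_le_nhds (s := Set.Ioi (1:ℝ)))
      simpa using h2
    exact Tendsto.min ((Real.continuous_exp.tendsto _).comp e1) tendsto_const_nhds
  refine tendsto_of_tendsto_of_tendsto_of_le_of_le' hlo_lim hhi_lim ?_ ?_
  · -- lo p ≤ r p t eventually
    filter_upwards [hmem] with p hp
    obtain ⟨hx, hu⟩ := hr p hp.1 hp.2 t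
    set x := r p t
    set E := Real.exp (-t/(p-1)) with hE
    have hEpos : 0 < E := Real.exp_pos _
    have hp1' : (0:ℝ) < p - 1 := by linarith [hp.1]
    have h30 : (0:ℝ) < 3 - p := by linarith [hp.2]
    have hkey := (key hΛ hp.1 hp.2 hx.1 hx.2 hEpos hu).1
    have hpm1 : p - 1 ≠ 0 := by intro h; linarith [hp.1]
    have hpm3 : p - 3 ≠ 0 := by intro h; linarith [hp.2]
    set c' := (p-3)/(p-1) with hc'
    set c := (p-1)/(p-3) with hcc
    have hcneg : c ≤ 0 := by
      rw [hcc]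
      apply le_of_lt
      apply div_neg_of_pos_of_neg hp1'
      linarith
    have hAB : x ^ c' ≤ (3-p)/(p-1) * E + R ^ c' := by
      have h := mul_le_mul_of_nonneg_left hkey (le_of_lt (div_pos h30 hp1'))
      have heq : (3-p)/(p-1) * ((p-1)/(3-p) * (x ^ c' - R ^ c')) = x ^ c' - R ^ c' := by
        field_simp
      rw [heq] at h
      linarith
    set A := (3-p)/(p-1) * E with hAdef
    set B := R ^ c' with hBdef
    have hA0 : 0 < A := mul_pos (div_pos h30 hp1') hEpos
    have hB0 : 0 < B := Real.rpow_pos_of_pos hR _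
    have hmax : x ^ c' ≤ 2 * max A B := by
      refine le_trans hAB ?_
      calc A + B ≤ max A B + max A B := add_le_add (le_max_left _ _) (le_max_right _ _)
        _ = 2 * max A B := (two_mul _).symm
    have hxc' : 0 < x ^ c' := Real.rpow_pos_of_pos hx.1 _
    have h1 := Real.rpow_le_rpow_of_nonpos hxc' hmax hcneg
    have hxx : (x ^ c') ^ c = x := by
      rw [← Real.rpow_mul hx.1.le, show c' * c = 1 by
        rw [hc', hcc]; field_simp [hpm1, hpm3], Real.rpow_one]
    have hmaxAB : (max A B) ^ c = min (A ^ c) (B ^ c) := by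
      rcases le_total A B with h | h
      · rw [max_eq_right h, min_eq_right (Real.rpow_le_rpow_of_nonpos hA0 h hcneg)]
      · rw [max_eq_left h, min_eq_left (Real.rpow_le_rpow_of_nonpos hB0 h hcneg)]
    have hBc : B ^ c = R := by
      rw [hBdef, ← Real.rpow_mul hR.le, show c' * c = 1 by
        rw [hc', hcc]; field_simp [hpm1, hpm3], Real.rpow_one]
    have hAc : A ^ c = Real.exp ((Real.log (3-p) - Real.log (p-1)) * c + t/(3-p)) := by
      rw [hAdef, Real.mul_rpow (le_of_lt (div_pos h30 hp1')) hEpos.le]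
      rw [Real.rpow_def_of_pos (div_pos h30 hp1'), Real.rpow_def_of_pos hEpos,
        Real.log_exp, Real.log_div h30.ne' hp1'.ne']
      rw [← Real.exp_add]
      have hct : -t/(p-1) * c = t/(3-p) := by
        rw [hcc]; field_simp [hpm1, hpm3]; ring
      rw [hct]
    have h2mc : (2 * max A B) ^ c = Real.exp (Real.log 2 * c) * min (A ^ c) (B ^ c) := by
      rw [Real.mul_rpow (by norm_num) (le_max_of_le_left hA0.le), hmaxAB,
        Real.rpow_def_of_pos (by norm_num : (0:ℝ) < 2)]
    calc lo p = (2 * max A B) ^ c := by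
          rw [hlo, h2mc, hAc, hBc]
      _ ≤ (x ^ c') ^ c := h1
      _ = x := hxx
  · -- r p t ≤ hi p eventually
    filter_upwards [hmem] with p hp
    obtain ⟨hx, hu⟩ := hr p hp.1 hp.2 t
    set x := r p t
    set E := Real.exp (-t/(p-1)) with hE
    have hEpos : 0 < E := Real.exp_pos _
    have hp1' : (0:ℝ) < p - 1 := by linarith [hp.1]
    have hkey := (key hΛ hp.1 hp.2 hx.1 hx.2 hEpos hu).2
    have hpm1 : p - 1 ≠ 0 := by intro h; linarith [hp.1]
    set a := 2/(p-1) with ha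
    have ha0 : 0 < a := by positivity
    have hxa : 0 < x ^ a := Real.rpow_pos_of_pos hx.1 _
    rw [Real.rpow_neg hx.1.le] at hkey
    have hxle : x ^ a ≤ Cc Λ / E := by
      rw [le_div_iff₀ hEpos]
      have h := mul_le_mul_of_nonneg_left hkey hxa.le
      rwa [← mul_assoc, mul_inv_cancel₀ hxa.ne', one_mul] at h
    have hx1 : x = (x ^ a) ^ ((p-1)/2) := by
      rw [← Real.rpow_mul hx.1.le, show a * ((p-1)/2) = 1 by rw [ha]; field_simp [hpm1],
        Real.rpow_one]
    have hfin : x ≤ Real.exp (Real.log (Cc Λ) * ((p-1)/2) + t/2) := by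
      calc x = (x ^ a) ^ ((p-1)/2) := hx1
        _ ≤ (Cc Λ / E) ^ ((p-1)/2) :=
            Real.rpow_le_rpow hxa.le hxle (by positivity)
        _ = Real.exp (Real.log (Cc Λ) * ((p-1)/2) + t/2) := by
            rw [Real.rpow_def_of_pos (div_pos hC hEpos),
              Real.log_div hC.ne' hEpos.ne', hE, Real.log_exp]
            congr 1
            field_simp
            ring
    exact le_min hfin hx.2.le
end
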